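/- arXiv:alg-geom/9612005 — 4 statements merged into one kernel-verified Lean document; each statement's English description precedes it below -/
import Mathlib

section
/- Let R be a commutative ring containing ℚ. For each f ∈ x²/2 + x³·R[[x]] there exists a unique g ∈ x²/2 + x³·R[[x]] such that g ∘ f' + f = x·f', where f' denotes the formal derivative and ∘ is composition of formal power series (well-defined since f' has zero constant term). -/
open PowerSeries

/-- Composition `f(g)` of formal power series, intended for `g` with zero constant term. -/
noncomputable def pscomp {R : Type*} [CommRing R] (f g : PowerSeries R) : PowerSeries R :=
  PowerSeries.mk fun n => ∑ k ∈ Finset.range (n + 1), coeff k f * coeff n (g ^ k)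

section aux

variable {R : Type*} [CommRing R]

/-- Recursive definition of the coefficients of the solution `g` to `pscomp g d = h`. -/
noncomputable def grec (d h : PowerSeries R) : ℕ → R := fun n =>
  coeff n h - ∑ k ∈ (Finset.range n).attach,
    grec d h k * coeff n (d ^ (k : ℕ))
termination_by n => n
decreasing_by exact Finset.mem_range.mp k.2

lemma grec_eq (d h : PowerSeries R) (n : ℕ) :
    grec d h n = coeff n h - ∑ k ∈ Finset.range n, grec d h k * coeff n (d ^ k) := by
  rw [grec]
  congr 1
  exact Finset.sum_attach (Finset.range n) (fun k => grec d h k * coeff n (d ^ k))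

variable {d : PowerSeries R} (hd0 : coeff 0 d = 0) (hd1 : coeff 1 d = 1)

lemma coeff_pow_eq_zero (hd0 : coeff 0 d = 0) {n k : ℕ} (h : n < k) :
    coeff n (d ^ k) = 0 := by
  have hd0' : constantCoeff d = 0 := by
    rw [← PowerSeries.coeff_zero_eq_constantCoeff]; exact hd0
  obtain ⟨u, hu⟩ := PowerSeries.X_dvd_iff.mpr hd0'
  rw [hu, mul_pow, coeff_X_pow_mul', if_neg (by omega)]

lemma coeff_pow_self (hd0 : coeff 0 d = 0) (hd1 : coeff 1 d = 1) (n : ℕ) :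
    coeff n (d ^ n) = 1 := by
  have hd0' : constantCoeff d = 0 := by
    rw [← PowerSeries.coeff_zero_eq_constantCoeff]; exact hd0
  obtain ⟨u, hu⟩ := PowerSeries.X_dvd_iff.mpr hd0'
  have hu0 : coeff 0 u = 1 := by
    have := hd1
    rw [hu] at this
    simpa [PowerSeries.coeff_succ_X_mul] using this
  rw [hu, mul_pow, coeff_X_pow_mul', if_pos le_rfl]
  simp only [Nat.sub_self, PowerSeries.coeff_zero_eq_constantCoeff_apply, map_pow]
  have hu0' : constantCoeff u = 1 := by
    rw [← PowerSeries.coeff_zero_eq_constantCoeff_apply]; exact hu0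
  rw [hu0', one_pow]

lemma coeff_pscomp (hd0 : coeff 0 d = 0) (hd1 : coeff 1 d = 1)
    (g : PowerSeries R) (n : ℕ) :
    coeff n (pscomp g d) =
      (∑ k ∈ Finset.range n, coeff k g * coeff n (d ^ k)) + coeff n g := by
  simp only [pscomp, coeff_mk]
  rw [Finset.sum_range_succ, coeff_pow_self hd0 hd1, mul_one]

lemma exists_unique_pscomp (hd0 : coeff 0 d = 0) (hd1 : coeff 1 d = 1)
    (h : PowerSeries R) : ∃! g : PowerSeries R, pscomp g d = h := by
  refine ⟨PowerSeries.mk (grec d h), ?_, ?_⟩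
  · ext n
    rw [coeff_pscomp hd0 hd1]
    simp only [coeff_mk]
    rw [grec_eq]
    ring
  · intro g hg
    ext n
    induction n using Nat.strong_induction_on with
    | _ n ih =>
      have h1 := congrArg (coeff n) hg
      rw [coeff_pscomp hd0 hd1] at h1
      simp only [coeff_mk]
      rw [grec_eq]
      have hsum : ∑ k ∈ Finset.range n, coeff k g * coeff n (d ^ k)
          = ∑ k ∈ Finset.range n, grec d h k * coeff n (d ^ k) := by
        refine Finset.sum_congr rfl fun k hk => ?_
        rw [ih k (Finset.mem_range.mp hk), coeff_mk]
      rw [hsum] at h1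
      linear_combination h1

end aux

/-- Existence and uniqueness of the Legendre transform: for every
`f ∈ x²/2 + x³·R[[x]]` there is a unique `g ∈ x²/2 + x³·R[[x]]` with
`g ∘ f' + f = x·f'`. -/
theorem legendre_exists_unique {R : Type*} [CommRing R] [Algebra ℚ R]
    (f : PowerSeries R) (hf0 : coeff 0 f = 0) (hf1 : coeff 1 f = 0)
    (hf2 : coeff 2 f = algebraMap ℚ R (1 / 2)) :
    ∃! g : PowerSeries R,
      (coeff 0 g = 0 ∧ coeff 1 g = 0 ∧ coeff 2 g = algebraMap ℚ R (1 / 2)) ∧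
      pscomp g f.derivativeFun + f = X * f.derivativeFun := by
  set d := f.derivativeFun with hd
  have hd0 : coeff 0 d = 0 := by
    rw [hd, show f.derivativeFun = derivative R f from rfl, PowerSeries.coeff_derivative, hf1, zero_mul]
  have hd1 : coeff 1 d = 1 := by
    rw [hd, show f.derivativeFun = derivative R f from rfl, PowerSeries.coeff_derivative, hf2]
    push_cast
    rw [show ((1 : R) + 1) = algebraMap ℚ R 2 by rw [map_ofNat]; norm_num, ← map_mul]
    norm_num
  set h := X * d - f with hh
  obtain ⟨g, hg, hguniq⟩ := exists_unique_pscomp hd0 hd1 h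
  -- coefficients of g
  have key : ∀ n, coeff n g =
      coeff n h - ∑ k ∈ Finset.range n, coeff k g * coeff n (d ^ k) := by
    intro n
    have := congrArg (coeff n) hg
    rw [coeff_pscomp hd0 hd1] at this
    linear_combination this
  have hg0 : coeff 0 g = 0 := by
    rw [key 0]
    have hf0' : constantCoeff f = 0 := by
      rw [← PowerSeries.coeff_zero_eq_constantCoeff]; exact hf0
    simp [hh, hf0']
  have hg1 : coeff 1 g = 0 := by
    rw [key 1]
    simp [hh, hf1, hg0, PowerSeries.coeff_succ_X_mul, hd0]
  have hg2 : coeff 2 g = algebraMap ℚ R (1 / 2) := by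
    rw [key 2]
    have : (2 : ℕ) = 1 + 1 := rfl
    rw [Finset.sum_range_succ, Finset.sum_range_succ, hg0, hg1]
    simp only [zero_mul, mul_zero, add_zero, zero_add, Finset.range_zero,
      Finset.sum_empty]
    rw [hh]
    rw [map_sub, hf2]
    have hx : coeff 2 (X * d) = coeff 1 d := PowerSeries.coeff_succ_X_mul 1 d
    rw [hx, hd1]
    rw [← map_one (algebraMap ℚ R), ← map_sub]
    norm_num
  refine ⟨g, ⟨⟨hg0, hg1, hg2⟩, ?_⟩, ?_⟩
  · rw [hg, hh]; ring
  · rintro g' ⟨-, hg'⟩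
    apply hguniq
    rw [hh]
    linear_combination hg'
end

section
/- The Legendre transform is an involution: if f, g ∈ x²/2 + x³·R[[x]] satisfy g ∘ f' + f = x·f' (i.e. g = ℒf), then f ∘ g' + g = x·g' (i.e. f = ℒg). -/
open PowerSeries

namespace LegendreAux

variable {R : Type*} [CommRing R]

lemma coeff_pscomp (f g : PowerSeries R) (n : ℕ) :
    coeff n (pscomp f g) = ∑ k ∈ Finset.range (n + 1), coeff k f * coeff n (g ^ k) := by
  simp [pscomp]

lemma coeff_pow_eq_zero {g : PowerSeries R} (hg : constantCoeff g = 0) {n k : ℕ}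
    (h : n < k) : coeff n (g ^ k) = 0 := by
  have hd : (X : PowerSeries R) ^ k ∣ g ^ k :=
    pow_dvd_pow_of_dvd (X_dvd_iff.mpr hg) k
  exact (X_pow_dvd_iff.mp hd) n h

lemma coeff_eval₂ (P : Polynomial R) {g : PowerSeries R} (hg : constantCoeff g = 0) (n : ℕ) :
    coeff n (P.eval₂ C g) = ∑ k ∈ Finset.range (n + 1), P.coeff k * coeff n (g ^ k) := by
  have hdeg : P.natDegree < P.natDegree + n + 1 := by omega
  rw [Polynomial.eval₂_eq_sum_range' C hdeg g, map_sum]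
  rw [← Finset.sum_subset (Finset.range_subset_range.mpr (by omega :
      n + 1 ≤ P.natDegree + n + 1))]
  · exact Finset.sum_congr rfl fun k _ => by rw [coeff_C_mul]
  · intro k _ hk
    rw [Finset.mem_range, not_lt] at hk
    rw [coeff_C_mul, coeff_pow_eq_zero hg (by omega), mul_zero]

lemma coeff_pscomp_eq_eval₂ {g : PowerSeries R} (hg : constantCoeff g = 0)
    (f : PowerSeries R) {n m : ℕ} (hnm : n < m) :
    coeff n (pscomp f g) = coeff n ((trunc m f).eval₂ C g) := by
  rw [coeff_pscomp, coeff_eval₂ _ hg]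
  refine Finset.sum_congr rfl fun k hk => ?_
  rw [Finset.mem_range] at hk
  rw [coeff_trunc, if_pos (by omega)]

lemma coeff_eval₂_congr_poly {P Q : Polynomial R} {g : PowerSeries R}
    (hg : constantCoeff g = 0) {n m : ℕ} (hnm : n < m)
    (hPQ : ∀ i, i < m → P.coeff i = Q.coeff i) :
    coeff n (P.eval₂ C g) = coeff n (Q.eval₂ C g) := by
  rw [coeff_eval₂ _ hg, coeff_eval₂ _ hg]
  refine Finset.sum_congr rfl fun k hk => ?_
  rw [Finset.mem_range] at hk
  rw [hPQ k (by omega)]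

lemma coeff_mul_congr {A A' B B' : PowerSeries R} {n : ℕ}
    (hA : ∀ i ≤ n, coeff i A = coeff i A') (hB : ∀ i ≤ n, coeff i B = coeff i B') :
    coeff n (A * B) = coeff n (A' * B') := by
  rw [coeff_mul, coeff_mul]
  refine Finset.sum_congr rfl fun p hp => ?_
  rw [Finset.HasAntidiagonal.mem_antidiagonal] at hp
  rw [hA p.1 (by omega), hB p.2 (by omega)]

lemma coeff_pow_congr {s t : PowerSeries R} {n : ℕ}
    (h : ∀ i ≤ n, coeff i s = coeff i t) (k : ℕ) :
    ∀ i ≤ n, coeff i (s ^ k) = coeff i (t ^ k) := by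
  induction k with
  | zero => intro i _; rfl
  | succ k ih =>
      intro i hi
      rw [pow_succ, pow_succ]
      exact coeff_mul_congr (fun j hj => ih j (le_trans hj hi))
        (fun j hj => h j (le_trans hj hi))

lemma coeff_eval₂_congr_arg (P : Polynomial R) {s t : PowerSeries R}
    (hs : constantCoeff s = 0) (ht : constantCoeff t = 0) {n : ℕ}
    (h : ∀ i ≤ n, coeff i s = coeff i t) :
    coeff n (P.eval₂ C s) = coeff n (P.eval₂ C t) := by
  rw [coeff_eval₂ _ hs, coeff_eval₂ _ ht]
  exact Finset.sum_congr rfl fun k _ => by rw [coeff_pow_congr h k n le_rfl]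
lemma pscomp_add (f₁ f₂ g : PowerSeries R) :
    pscomp (f₁ + f₂) g = pscomp f₁ g + pscomp f₂ g := by
  ext n
  simp [coeff_pscomp, add_mul, Finset.sum_add_distrib]

lemma constantCoeff_pscomp {f g : PowerSeries R} (hf : constantCoeff f = 0) :
    constantCoeff (pscomp f g) = 0 := by
  rw [← coeff_zero_eq_constantCoeff_apply, coeff_pscomp, Finset.sum_range_one, pow_zero,
    coeff_zero_eq_constantCoeff_apply, hf, zero_mul]

lemma pscomp_X_left {g : PowerSeries R} (hg : constantCoeff g = 0) :
    pscomp X g = g := by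
  ext n
  rw [coeff_pscomp]
  rcases Nat.eq_zero_or_pos n with rfl | hn
  · simp [coeff_zero_eq_constantCoeff_apply, hg]
  · rw [Finset.sum_eq_single_of_mem 1 (Finset.mem_range.mpr (by omega))]
    · simp
    · intro k _ hk
      rw [coeff_X, if_neg hk, zero_mul]

lemma pscomp_X_right (f : PowerSeries R) : pscomp f X = f := by
  ext n
  rw [coeff_pscomp, Finset.sum_eq_single_of_mem n (Finset.mem_range.mpr (by omega))]
  · rw [coeff_X_pow, if_pos rfl, mul_one]
  · intro k _ hk
    rw [coeff_X_pow, if_neg (fun hh => hk hh.symm), mul_zero]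

lemma pscomp_mul {g : PowerSeries R} (hg : constantCoeff g = 0) (a b : PowerSeries R) :
    pscomp (a * b) g = pscomp a g * pscomp b g := by
  ext n
  rw [coeff_pscomp_eq_eval₂ hg (a * b) (Nat.lt_succ_self n),
    coeff_eval₂_congr_poly hg (Nat.lt_succ_self n)
      (Q := trunc (n+1) a * trunc (n+1) b) ?_, Polynomial.eval₂_mul]
  · refine coeff_mul_congr (fun i hi => ?_) (fun i hi => ?_) <;>
      exact (coeff_pscomp_eq_eval₂ hg _ (by omega)).symm
  · intro i him
    rw [coeff_trunc, if_pos him, Polynomial.coeff_mul, coeff_mul]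
    refine Finset.sum_congr rfl fun p hp => ?_
    rw [Finset.HasAntidiagonal.mem_antidiagonal] at hp
    rw [coeff_trunc, coeff_trunc, if_pos (by omega), if_pos (by omega)]

lemma pscomp_assoc {b c : PowerSeries R} (a : PowerSeries R)
    (hb : constantCoeff b = 0) (hc : constantCoeff c = 0) :
    pscomp (pscomp a b) c = pscomp a (pscomp b c) := by
  have hbc : constantCoeff (pscomp b c) = 0 := constantCoeff_pscomp hb
  ext n
  set m := n + 1 with hm
  set P := trunc m a with hP
  set Q := trunc m b with hQ
  have hQ0 : constantCoeff ((Q : Polynomial R) : PowerSeries R) = 0 := by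
    rw [← coeff_zero_eq_constantCoeff_apply, Polynomial.coeff_coe, hQ, coeff_trunc,
      if_pos (by omega), coeff_zero_eq_constantCoeff_apply, hb]
  have hQc : constantCoeff (Q.eval₂ C c) = 0 := by
    rw [← coeff_zero_eq_constantCoeff_apply, coeff_eval₂ _ hc, Finset.sum_range_one, hQ,
      coeff_trunc, if_pos (by omega), coeff_zero_eq_constantCoeff_apply, hb, zero_mul]
  -- RHS
  have hRHS : coeff n (pscomp a (pscomp b c)) = coeff n ((P.comp Q).eval₂ C c) := by
    rw [coeff_pscomp_eq_eval₂ hbc a (by omega : n < m)]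
    rw [coeff_eval₂_congr_arg P hbc hQc
      (fun i hi => coeff_pscomp_eq_eval₂ hc b (by omega : i < m))]
    rw [← Polynomial.eval₂_comp]
  -- LHS
  have key : ∀ i, i < m → (trunc m (pscomp a b)).coeff i = (P.comp Q).coeff i := by
    intro i him
    have h1 : (Polynomial.coeToPowerSeries.ringHom (P.comp Q) : PowerSeries R)
        = P.eval₂ C (Polynomial.coeToPowerSeries.ringHom Q) := by
      rw [Polynomial.comp, Polynomial.hom_eval₂]
      congr 1
      ext r
      simp
    simp only [Polynomial.coeToPowerSeries.ringHom_apply] at h1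
    rw [coeff_trunc, if_pos him, ← Polynomial.coeff_coe, h1]
    rw [coeff_pscomp_eq_eval₂ hb a (him : i < m)]
    have hcoe : ∀ j ≤ i, coeff j (((Q : Polynomial R) : PowerSeries R)) = coeff j b := by
      intro j hj
      rw [Polynomial.coeff_coe, hQ, coeff_trunc, if_pos (by omega)]
    exact coeff_eval₂_congr_arg P hb hQ0 (fun j hj => (hcoe j hj).symm)
  rw [hRHS, coeff_pscomp_eq_eval₂ hc (pscomp a b) (by omega : n < m),
    coeff_eval₂_congr_poly hc (by omega : n < m) key]
lemma coeff_derivativeFun' (f : PowerSeries R) (n : ℕ) :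
    coeff n f.derivativeFun = coeff (n + 1) f * (n + 1) := coeff_derivative f n

lemma trunc_derivativeFun' (f : PowerSeries R) (n : ℕ) :
    trunc n f.derivativeFun = Polynomial.derivative (trunc (n + 1) f) := trunc_derivative f n

lemma derivativeFun_C' (r : R) : (C r).derivativeFun = 0 := derivative_C

lemma derivativeFun_X : (X : PowerSeries R).derivativeFun = 1 := by
  ext n
  rw [coeff_derivativeFun']
  cases n with
  | zero => simp
  | succ n => simp [coeff_X, coeff_one, Nat.succ_ne_zero]

lemma derivativeFun_pow (g : PowerSeries R) (k : ℕ) :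
    (g ^ (k + 1)).derivativeFun = (k + 1 : ℕ) • (g ^ k * g.derivativeFun) := by
  induction k with
  | zero => simp
  | succ k ih =>
      rw [pow_succ, derivativeFun_mul, ih]
      simp only [nsmul_eq_mul, smul_eq_mul]
      push_cast
      ring

lemma derivativeFun_eval₂ (P : Polynomial R) (g : PowerSeries R) :
    (P.eval₂ C g).derivativeFun
      = (Polynomial.derivative P).eval₂ C g * g.derivativeFun := by
  induction P using Polynomial.induction_on' with
  | add p q hp hq =>
      rw [Polynomial.eval₂_add, derivativeFun_add, hp, hq, map_add, Polynomial.eval₂_add,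
        add_mul]
  | monomial k a =>
      rw [Polynomial.eval₂_monomial, Polynomial.derivative_monomial, Polynomial.eval₂_monomial]
      cases k with
      | zero => simp [derivativeFun_mul, derivativeFun_C', derivativeFun_one]
      | succ k =>
          rw [derivativeFun_mul, derivativeFun_C', derivativeFun_pow]
          simp only [smul_zero, add_zero, nsmul_eq_mul, smul_eq_mul, Nat.add_sub_cancel]
          rw [map_mul, map_natCast]
          push_cast
          ring

lemma derivativeFun_pscomp (f : PowerSeries R) {g : PowerSeries R}
    (hg : constantCoeff g = 0) :
    (pscomp f g).derivativeFun = pscomp f.derivativeFun g * g.derivativeFun := by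
  ext n
  rw [coeff_derivativeFun', coeff_pscomp_eq_eval₂ hg f (by omega : n + 1 < n + 1 + 1),
    ← coeff_derivativeFun', derivativeFun_eval₂, ← trunc_derivativeFun']
  exact coeff_mul_congr
    (fun i hi => (coeff_pscomp_eq_eval₂ hg f.derivativeFun (by omega : i < n + 1)).symm)
    (fun i _ => rfl)

noncomputable def linv (p : PowerSeries R) : ℕ → R
  | 0 => 0
  | 1 => 1
  | (n+2) => -∑ k ∈ (Finset.range (n+2)).attach,
      linv p k.1 * coeff (n+2) (p ^ (k.1 : ℕ))
  decreasing_by exact Finset.mem_range.mp k.2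

lemma coeff_pow_self {p : PowerSeries R} (hp0 : constantCoeff p = 0)
    (hp1 : coeff 1 p = 1) : ∀ n, coeff n (p ^ n) = 1 := by
  intro n
  induction n with
  | zero => simp
  | succ n ih =>
      rw [pow_succ, mul_comm, coeff_mul]
      rw [Finset.sum_eq_single (1, n)]
      · rw [hp1, ih, one_mul]
      · rintro ⟨i, j⟩ hij hne
        rw [Finset.HasAntidiagonal.mem_antidiagonal] at hij
        rcases Nat.lt_or_ge j n with hj | hj
        · rw [coeff_pow_eq_zero hp0 hj, mul_zero]
        · rcases Nat.lt_or_ge j (n + 1) with hj2 | hj2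
          · exfalso; apply hne
            have hj3 : j = n := by omega
            have hi : i = 1 := by omega
            rw [hi, hj3]
          · have hi : i = 0 := by omega
            subst hi
            simp only [coeff_zero_eq_constantCoeff_apply, hp0, zero_mul]
      · intro hmem
        exfalso; exact hmem (Finset.HasAntidiagonal.mem_antidiagonal.mpr (by omega))

lemma pscomp_linv {p : PowerSeries R} (hp0 : constantCoeff p = 0)
    (hp1 : coeff 1 p = 1) : pscomp (PowerSeries.mk (linv p)) p = X := by
  ext n
  rw [coeff_pscomp]
  match n with
  | 0 => simp [linv]
  | 1 =>
      rw [Finset.sum_range_succ, Finset.sum_range_one]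
      simp [linv, hp1, coeff_X]
  | (n+2) =>
      rw [Finset.sum_range_succ]
      have hrec : (linv p (n+2) : R)
          = -∑ k ∈ Finset.range (n+2), linv p k * coeff (n+2) (p ^ k) := by
        rw [linv, ← Finset.sum_attach (Finset.range (n+2))
          (fun k => linv p k * coeff (n+2) (p ^ k))]
      simp only [coeff_mk]
      rw [hrec, coeff_pow_self hp0 hp1, mul_one, coeff_X, if_neg (by omega)]
      ring

lemma eq_zero_of_mul_unit {u a : PowerSeries R} (hu : IsUnit (constantCoeff u))
    (h : a * u = 0) : a = 0 := by
  obtain ⟨v, rfl⟩ := PowerSeries.isUnit_iff_constantCoeff.mpr hu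
  calc a = a * v * v⁻¹ := by rw [mul_assoc, Units.mul_inv, mul_one]
    _ = 0 := by rw [h, zero_mul]

end LegendreAux

open LegendreAux in
/-- The Legendre transform is an involution: if `f, g ∈ x²/2 + x³·R[[x]]` satisfy
`g ∘ f' + f = x·f'` (i.e. `g = ℒf`), then `f ∘ g' + g = x·g'` (i.e. `f = ℒg`). -/
theorem legendre_involution {R : Type*} [CommRing R] [Algebra ℚ R]
    (f g : PowerSeries R)
    (hf0 : coeff 0 f = 0) (hf1 : coeff 1 f = 0)
    (hf2 : coeff 2 f = algebraMap ℚ R (1 / 2))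
    (hg0 : coeff 0 g = 0) (hg1 : coeff 1 g = 0)
    (hg2 : coeff 2 g = algebraMap ℚ R (1 / 2))
    (h : pscomp g f.derivativeFun + f = X * f.derivativeFun) :
    pscomp f g.derivativeFun + g = X * g.derivativeFun := by
  classical
  set f' := f.derivativeFun with hf'def
  set g' := g.derivativeFun with hg'def
  have hf'0 : constantCoeff f' = 0 := by
    rw [← coeff_zero_eq_constantCoeff_apply, hf'def, coeff_derivativeFun', hf1, zero_mul]
  have hg'0 : constantCoeff g' = 0 := by
    rw [← coeff_zero_eq_constantCoeff_apply, hg'def, coeff_derivativeFun', hg1, zero_mul]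
  have half2 : (algebraMap ℚ R) (1/2) * 2 = 1 := by
    rw [show (2:R) = algebraMap ℚ R 2 by rw [map_ofNat], ← map_mul]
    norm_num
  have hf'1 : coeff 1 f' = 1 := by
    rw [hf'def, coeff_derivativeFun', hf2]
    norm_num [half2]
  have hg'1 : coeff 1 g' = 1 := by
    rw [hg'def, coeff_derivativeFun', hg2]
    norm_num [half2]
  have hf''0 : IsUnit (constantCoeff f'.derivativeFun) := by
    rw [← coeff_zero_eq_constantCoeff_apply, coeff_derivativeFun', hf'1]
    norm_num
  -- Step 1 : differentiate h to get  g' ∘ f' = X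
  have dh := congrArg PowerSeries.derivativeFun h
  rw [derivativeFun_add, derivativeFun_pscomp g hf'0, derivativeFun_mul, derivativeFun_X] at dh
  simp only [smul_eq_mul, mul_one] at dh
  have dh2 : pscomp g' f' * f'.derivativeFun = X * f'.derivativeFun := add_right_cancel dh
  have hz : (pscomp g' f' - X) * f'.derivativeFun = 0 := by
    rw [sub_mul, dh2, sub_self]
  have hgf : pscomp g' f' = X := sub_eq_zero.mp (eq_zero_of_mul_unit hf''0 hz)
  -- Step 2 : f' ∘ g' = X
  have hqg : pscomp (PowerSeries.mk (linv g')) g' = X := pscomp_linv hg'0 hg'1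
  have hfq : f' = PowerSeries.mk (linv g') := by
    calc f' = pscomp X f' := (pscomp_X_left hf'0).symm
      _ = pscomp (pscomp (PowerSeries.mk (linv g')) g') f' := by rw [hqg]
      _ = pscomp (PowerSeries.mk (linv g')) (pscomp g' f') := pscomp_assoc _ hg'0 hf'0
      _ = pscomp (PowerSeries.mk (linv g')) X := by rw [hgf]
      _ = PowerSeries.mk (linv g') := pscomp_X_right _
  have hfg : pscomp f' g' = X := by rw [hfq]; exact hqg
  -- Step 3 : compose h with g'
  have h3' := congrArg (fun u => pscomp u g') h
  have h3 : pscomp (pscomp g f' + f) g' = pscomp (X * f') g' := h3'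
  rw [pscomp_add, pscomp_mul hg'0, pscomp_X_left hg'0, pscomp_assoc g hf'0 hg'0, hfg,
    pscomp_X_right] at h3
  linear_combination h3
end

section
/- If f ∈ x²/2 + x³·R[[x]] and g = ℒf is its Legendre transform, then g' ∘ f' = x as formal power series; in particular f' and g' are mutually inverse under composition. -/
open PowerSeries

lemma coeff_pow_eq_zero' {R : Type*} [CommRing R] {h : PowerSeries R}
    (h0 : constantCoeff h = 0) {n k : ℕ} (hk : n < k) : coeff n (h ^ k) = 0 := by
  have hx : (X : PowerSeries R) ∣ h := X_dvd_iff.mpr h0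
  have : (X : PowerSeries R) ^ k ∣ h ^ k := pow_dvd_pow_of_dvd hx k
  exact X_pow_dvd_iff.mp this n hk

/-- coefficient of `pscomp a h * w`. -/
lemma coeff_pscomp_mul {R : Type*} [CommRing R] (a h w : PowerSeries R)
    (h0 : constantCoeff h = 0) (n : ℕ) :
    coeff n (pscomp a h * w)
      = ∑ k ∈ Finset.range (n + 1), coeff k a * coeff n (h ^ k * w) := by
  rw [coeff_mul]
  have step : ∀ p ∈ Finset.HasAntidiagonal.antidiagonal n,
      coeff p.1 (pscomp a h) * coeff p.2 w
        = ∑ k ∈ Finset.range (n + 1), coeff k a * (coeff p.1 (h ^ k) * coeff p.2 w) := by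
    intro p hp
    have hp1 : p.1 ≤ n := by
      have := Finset.HasAntidiagonal.antidiagonal.fst_le hp
      exact this
    have : coeff p.1 (pscomp a h)
        = ∑ k ∈ Finset.range (n + 1), coeff k a * coeff p.1 (h ^ k) := by
      rw [pscomp, coeff_mk]
      apply Finset.sum_subset
      · exact Finset.range_subset_range.mpr (by omega)
      · intro k _ hk
        have : p.1 < k := by
          simp only [Finset.mem_range, not_lt] at hk
          omega
        rw [coeff_pow_eq_zero' h0 this, mul_zero]
    rw [this, Finset.sum_mul]
    simp [mul_assoc]
  rw [Finset.sum_congr rfl step, Finset.sum_comm]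
  apply Finset.sum_congr rfl
  intro k _
  rw [coeff_mul, Finset.mul_sum]

lemma coeff_derivativeFun_fix {R : Type*} [CommRing R] (f : PowerSeries R) (n : ℕ) :
    coeff n f.derivativeFun = coeff (n + 1) f * (n + 1) :=
  coeff_derivative f n

lemma derivativeFun_pow {R : Type*} [CommRing R] (h : PowerSeries R) (k : ℕ) :
    derivativeFun (h ^ (k + 1)) = (k + 1) • (h ^ k * derivativeFun h) := by
  induction k with
  | zero => simp [derivativeFun_mul]
  | succ k ih =>
    rw [pow_succ, derivativeFun_mul, ih, smul_eq_mul, smul_eq_mul, succ_nsmul, succ_nsmul]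
    ring_nf

/-- Chain rule for `pscomp`. -/
lemma pscomp_derivativeFun {R : Type*} [CommRing R] (a h : PowerSeries R)
    (h0 : constantCoeff h = 0) :
    derivativeFun (pscomp a h) = pscomp a.derivativeFun h * h.derivativeFun := by
  ext n
  rw [coeff_derivativeFun_fix, coeff_pscomp_mul _ _ _ h0]
  have lhs : coeff (n+1) (pscomp a h) * ((n:R) + 1)
      = ∑ k ∈ Finset.range (n + 2), coeff k a * (coeff (n+1) (h ^ k) * ((n:R)+1)) := by
    rw [pscomp, coeff_mk, Finset.sum_mul]
    simp [mul_assoc]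
  rw [lhs]
  have key : ∀ k, coeff (n+1) (h ^ k) * ((n:R)+1) = coeff n (derivativeFun (h ^ k)) := by
    intro k
    rw [coeff_derivativeFun_fix]
  simp_rw [key]
  rw [Finset.sum_range_succ']
  simp only [pow_zero, derivativeFun_one, map_zero, mul_zero, add_zero]
  apply Finset.sum_congr rfl
  intro k _
  rw [derivativeFun_pow, map_nsmul, coeff_derivativeFun_fix, nsmul_eq_mul]
  push_cast
  ring

/-- If `f ∈ x²/2 + x³·R[[x]]` and `g = ℒf` is its Legendre transform (characterized by
`g ∘ f' + f = x·f'`), then `g' ∘ f' = x`: the derivatives are mutually inverse under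
composition. -/
theorem legendre_deriv_inverse {R : Type*} [CommRing R] [Algebra ℚ R]
    (f g : PowerSeries R)
    (hf0 : coeff 0 f = 0) (hf1 : coeff 1 f = 0)
    (hf2 : coeff 2 f = algebraMap ℚ R (1 / 2))
    (hg0 : coeff 0 g = 0) (hg1 : coeff 1 g = 0)
    (hg2 : coeff 2 g = algebraMap ℚ R (1 / 2))
    (h : pscomp g f.derivativeFun + f = X * f.derivativeFun) :
    pscomp g.derivativeFun f.derivativeFun = X := by
  set f' := f.derivativeFun with hf'
  have hc0 : constantCoeff f' = 0 := by
    rw [← coeff_zero_eq_constantCoeff_apply, hf', coeff_derivativeFun_fix]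
    simp [hf1]
  have hdX : (X : PowerSeries R).derivativeFun = 1 := by
    ext n
    rw [coeff_derivativeFun_fix, coeff_X, coeff_one]
    split_ifs with h1 h2 h3 <;> simp_all
  have hd := congrArg derivativeFun h
  rw [derivativeFun_add, pscomp_derivativeFun _ _ hc0, derivativeFun_mul] at hd
  simp only [smul_eq_mul, hdX, mul_one] at hd
  rw [← hf'] at hd
  -- hd : pscomp g' f' * f'' + f' = X * f'' + f'
  have hd2 : pscomp g.derivativeFun f' * f'.derivativeFun = X * f'.derivativeFun :=
    add_right_cancel hd
  have hu : IsUnit f'.derivativeFun := by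
    have hone : constantCoeff f'.derivativeFun = 1 := by
      rw [← coeff_zero_eq_constantCoeff_apply, coeff_derivativeFun_fix, hf', coeff_derivativeFun_fix,
        hf2]
      push_cast
      rw [show ((0:R)+1) = 1 by norm_num, mul_one,
        show ((1:R)+1) = algebraMap ℚ R 2 by
          rw [(map_ofNat (algebraMap ℚ R) 2)]; norm_num, ← map_mul]
      norm_num
    rw [isUnit_iff_constantCoeff, hone]
    exact isUnit_one
  exact hu.mul_right_cancel hd2
end

section
/- With a₀ = ∑_{n≥3} v_{0,n} xⁿ/n! and b₀ defined by x²/2 + b₀ = ℒ(x²/2 - a₀), the coefficient of x⁵/5! in b₀ equals v_{0,5} + 10·v_{0,4}·v_{0,3} + 15·v_{0,3}³. -/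
open PowerSeries

/-- The coefficient ring: polynomials over `ℚ` in the variables `v_{0,n}`, `n ≥ 3`,
where the variable `v_{0,n}` is `MvPolynomial.X n`. -/
noncomputable abbrev VRing : Type := MvPolynomial ℕ ℚ

/-- The generating function `a₀ = ∑_{n≥3} v_{0,n}·xⁿ/n!`. -/
noncomputable def aZero : PowerSeries VRing :=
  PowerSeries.mk fun n =>
    if 3 ≤ n then MvPolynomial.C ((n.factorial : ℚ)⁻¹) * MvPolynomial.X n else 0

/-- `x²/2` as a power series over `VRing`. -/
noncomputable def halfXSq : PowerSeries VRing :=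
  PowerSeries.C (R := VRing) (MvPolynomial.C (1 / 2 : ℚ)) * X ^ 2

set_option linter.deprecated false in
theorem coeff_derivativeFun' {R : Type*} [CommSemiring R] (f : PowerSeries R) (n : ℕ) :
    coeff n f.derivativeFun = coeff (n + 1) f * (n + 1) :=
  coeff_derivative f n

set_option linter.deprecated false in
theorem constantCoeff_derivativeFun' {R : Type*} [CommSemiring R] (f : PowerSeries R) :
    constantCoeff f.derivativeFun = coeff 1 f := by
  rw [← coeff_zero_eq_constantCoeff_apply, coeff_derivativeFun']; simp

noncomputable def Faux : PowerSeries VRing := (halfXSq - aZero).derivativeFun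

lemma cF0 : coeff 0 Faux = 0 := by
  simp [Faux, coeff_derivativeFun', constantCoeff_derivativeFun', halfXSq, aZero, coeff_mk, coeff_X_pow]
lemma cF1 : coeff 1 Faux = 1 := by
  simp [Faux, coeff_derivativeFun', constantCoeff_derivativeFun', halfXSq, aZero, coeff_mk, coeff_X_pow]
  rw [show ((1:VRing)+1) = MvPolynomial.C (2:ℚ) from by simp only [map_ofNat]; norm_num, ← MvPolynomial.C_mul]
  norm_num
lemma cF2 : coeff 2 Faux = -(MvPolynomial.C (1/2 : ℚ) * MvPolynomial.X 3) := by
  simp [Faux, coeff_derivativeFun', constantCoeff_derivativeFun', halfXSq, aZero, coeff_mk, coeff_X_pow, Nat.factorial]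
  rw [show ((2:VRing)+1) = MvPolynomial.C (3:ℚ) from by simp only [map_ofNat]; norm_num, mul_right_comm,
    ← MvPolynomial.C_mul]
  norm_num
lemma cF3 : coeff 3 Faux = -(MvPolynomial.C (1/6 : ℚ) * MvPolynomial.X 4) := by
  simp [Faux, coeff_derivativeFun', constantCoeff_derivativeFun', halfXSq, aZero, coeff_mk, coeff_X_pow, Nat.factorial]
  rw [show ((3:VRing)+1) = MvPolynomial.C (4:ℚ) from by simp only [map_ofNat]; norm_num, mul_right_comm,
    ← MvPolynomial.C_mul]
  norm_num
lemma cF4 : coeff 4 Faux = -(MvPolynomial.C (1/24 : ℚ) * MvPolynomial.X 5) := by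
  simp [Faux, coeff_derivativeFun', constantCoeff_derivativeFun', halfXSq, aZero, coeff_mk, coeff_X_pow, Nat.factorial]
  rw [show ((4:VRing)+1) = MvPolynomial.C (5:ℚ) from by simp only [map_ofNat]; norm_num, mul_right_comm,
    ← MvPolynomial.C_mul]
  norm_num
lemma cF5 : coeff 5 Faux = -(MvPolynomial.C (1/120 : ℚ) * MvPolynomial.X 6) := by
  simp [Faux, coeff_derivativeFun', constantCoeff_derivativeFun', halfXSq, aZero, coeff_mk, coeff_X_pow, Nat.factorial]
  rw [show ((5:VRing)+1) = MvPolynomial.C (6:ℚ) from by simp only [map_ofNat]; norm_num, mul_right_comm,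
    ← MvPolynomial.C_mul]
  norm_num

lemma cF0c : constantCoeff Faux = 0 := by
  rw [← coeff_zero_eq_constantCoeff_apply]; exact cF0

set_option maxHeartbeats 2000000 in
/-- If `x²/2 + b₀` is the Legendre transform of `x²/2 - a₀`, then the coefficient
`Mv_{0,5}` of `x⁵/5!` in `b₀` equals `v_{0,5} + 10·v_{0,4}·v_{0,3} + 15·v_{0,3}³`. -/
theorem genus0_coeff_five (b₀ : PowerSeries VRing)
    (h : pscomp (halfXSq + b₀) (halfXSq - aZero).derivativeFun + (halfXSq - aZero)
        = X * (halfXSq - aZero).derivativeFun) :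
    (120 : VRing) * coeff 5 b₀ =
      MvPolynomial.X 5 + 10 * (MvPolynomial.X 4 * MvPolynomial.X 3)
        + 15 * MvPolynomial.X 3 ^ 3 := by
  have hF : (halfXSq - aZero).derivativeFun = Faux := rfl
  rw [hF] at h
  have e1 := congrArg (coeff 1) h
  have e2 := congrArg (coeff 2) h
  have e3 := congrArg (coeff 3) h
  have e4 := congrArg (coeff 4) h
  have e5 := congrArg (coeff 5) h
  simp [pscomp, coeff_mk, map_add, map_sub, Finset.sum_range_succ,
    Finset.sum_range_zero, pow_succ, pow_zero, one_mul, coeff_one, coeff_mul,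
    Finset.Nat.sum_antidiagonal_eq_sum_range_succ_mk, coeff_X, coeff_X_pow,
    cF0, cF0c, cF1, cF2, cF3, cF4, cF5, halfXSq, aZero, Nat.factorial] at e1 e2 e3 e4
  simp [pscomp, coeff_mk, map_add, map_sub, Finset.sum_range_succ,
    Finset.sum_range_zero, pow_succ, pow_zero, one_mul, coeff_one, coeff_mul,
    Finset.Nat.sum_antidiagonal_eq_sum_range_succ_mk, coeff_X, coeff_X_pow,
    cF0, cF0c, cF1, cF2, cF3, cF4, cF5, halfXSq, aZero, Nat.factorial] at e5
  apply MvPolynomial.funext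
  intro x
  have E1 := congrArg (MvPolynomial.eval x) e1
  have E2 := congrArg (MvPolynomial.eval x) e2
  have E3 := congrArg (MvPolynomial.eval x) e3
  have E4 := congrArg (MvPolynomial.eval x) e4
  have E5 := congrArg (MvPolynomial.eval x) e5
  simp only [map_add, map_sub, map_mul, map_neg, map_one, map_zero, map_ofNat, map_pow,
    MvPolynomial.eval_C, MvPolynomial.eval_X] at E1 E2 E3 E4 E5 ⊢
  have hb1 : MvPolynomial.eval x ((coeff 1) b₀) = 0 := by linear_combination E1
  rw [hb1] at E2 E3 E4 E5
  have hb2 : MvPolynomial.eval x ((coeff 2) b₀) = 0 := by linear_combination E2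
  rw [hb2] at E3 E4 E5
  have hb3 : MvPolynomial.eval x ((coeff 3) b₀) = x 3 / 6 := by linear_combination E3
  rw [hb3] at E4 E5
  have hb4 : MvPolynomial.eval x ((coeff 4) b₀) = x 4 / 24 + x 3 ^ 2 / 8 := by
    linear_combination E4
  rw [hb4] at E5
  linear_combination (120:ℚ) * E5
end
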